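/- arXiv:1211.1883 — 4 statements merged into one kernel-verified Lean document; each statement's English description precedes it below -/
import Mathlib

section
/- Let A be a commutative algebra over a field k and let {·,·} be a Lie bracket on A (not assumed to satisfy the Leibniz rule). For f ∈ A define ξ_f: A → A by ξ_f(g) = {f,g} + g·{1,f}. Assume that ξ_f is a k-derivation of A for every f ∈ A. Then [ξ_f, ξ_g] = ξ_{{f,g}} for all f, g ∈ A; in particular the maps ξ_f form a Lie subalgebra of Der_k(A). -/
/-- Hamiltonian vector fields of a Jacobi-type bracket form a Lie algebra:
`ξ_f(g) = {f,g} + g·{1,f}` satisfies `[ξ_f, ξ_g] = ξ_{{f,g}}`. -/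
theorem stmt1 (k A : Type*) [Field k] [CommRing A] [Algebra k A]
    (bracket : A → A → A)
    (hadd : ∀ f g h : A, bracket (f + g) h = bracket f h + bracket g h)
    (hsmul : ∀ (c : k) (f g : A), bracket (c • f) g = c • bracket f g)
    (skew : ∀ f g, bracket f g = - bracket g f)
    (jacobi : ∀ f g h, bracket f (bracket g h) =
      bracket (bracket f g) h + bracket g (bracket f h))
    (ξ : A → Derivation k A A)
    (hξ : ∀ f g, ξ f g = bracket f g + g * bracket 1 f) :
    ∀ f g : A, ⁅ξ f, ξ g⁆ = ξ (bracket f g) := by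
  intro f g
  ext h
  rw [Derivation.commutator_apply]
  rw [hξ g h, hξ f h, map_add, map_add, Derivation.leibniz, Derivation.leibniz,
    smul_eq_mul, smul_eq_mul, smul_eq_mul, smul_eq_mul,
    hξ f (bracket g h), hξ g (bracket f h), hξ f (bracket 1 g), hξ g (bracket 1 f),
    hξ f h, hξ g h, hξ (bracket f g) h]
  linear_combination jacobi f g h - h * jacobi 1 f g - h * skew g (bracket 1 f)
end

section
/- Let A be a commutative k-algebra and v ⊆ Der_k(A) a k-subspace of derivations satisfying the incompressibility condition: whenever f_1,…,f_m ∈ A and ξ_1,…,ξ_m ∈ v satisfy Σ_i f_i ξ_i = 0 in Der_k(A), one has Σ_i ξ_i(f_i) = 0. Then there is a well-defined k-linear map D: A·v → A on the A-linear span of v given by D(Σ_i f_i ξ_i) = Σ_i ξ_i(f_i), and D satisfies D(g·θ) = g·D(θ) + θ(g) for all g ∈ A and θ ∈ A·v. -/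
section Aux
variable {k A : Type*} [Field k] [CommRing A] [Algebra k A]

lemma stmt5_eval_sum {m : ℕ} (f : Fin m → A) (ξ : Fin m → Derivation k A A) (g : A) :
    (∑ i, f i • ξ i : Derivation k A A) g = ∑ i, f i * ξ i g := by
  induction m with
  | zero => simp
  | succ n ih =>
      rw [Fin.sum_univ_succ, Fin.sum_univ_succ, ← ih (fun i => f i.succ) (fun i => ξ i.succ)]
      simp [smul_eq_mul]

lemma stmt5_key (v : Submodule k (Derivation k A A))
    (hinc : ∀ (m : ℕ) (f : Fin m → A) (ξ : Fin m → Derivation k A A),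
      (∀ i, ξ i ∈ v) → ∑ i, f i • ξ i = 0 → ∑ i, (ξ i) (f i) = 0)
    {m m' : ℕ} (f : Fin m → A) (ξ : Fin m → Derivation k A A)
    (f' : Fin m' → A) (ξ' : Fin m' → Derivation k A A)
    (hξ : ∀ i, ξ i ∈ v) (hξ' : ∀ i, ξ' i ∈ v)
    (h : ∑ i, f i • ξ i = ∑ i, f' i • ξ' i) :
    ∑ i, (ξ i) (f i) = ∑ i, (ξ' i) (f' i) := by
  have h0 := hinc (m + m') (Fin.append f (fun j => -f' j)) (Fin.append ξ ξ')
    (by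
      intro i
      refine Fin.addCases (fun i => ?_) (fun i => ?_) i
      · simpa using hξ i
      · simpa using hξ' i)
    (by
      rw [Fin.sum_univ_add]
      simp only [Fin.append_left, Fin.append_right, neg_smul]
      rw [h, ← Finset.sum_add_distrib]
      simp)
  rw [Fin.sum_univ_add] at h0
  simp only [Fin.append_left, Fin.append_right, map_neg] at h0
  rw [Finset.sum_neg_distrib, add_neg_eq_zero] at h0
  exact h0
end Aux

/-- If a subspace `v` of derivations satisfies the incompressibility condition,
then there is a well-defined divergence function `D` on the `A`-span of `v`
with `D(Σ fᵢ ξᵢ) = Σ ξᵢ(fᵢ)` and `D(g·θ) = g·D(θ) + θ(g)`. -/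
theorem stmt5 (k A : Type*) [Field k] [CommRing A] [Algebra k A]
    (v : Submodule k (Derivation k A A))
    (hinc : ∀ (m : ℕ) (f : Fin m → A) (ξ : Fin m → Derivation k A A),
      (∀ i, ξ i ∈ v) → ∑ i, f i • ξ i = 0 → ∑ i, (ξ i) (f i) = 0) :
    ∃ D : (Submodule.span A ((v : Set (Derivation k A A)))) →ₗ[k] A,
      (∀ (m : ℕ) (f : Fin m → A) (ξ : Fin m → Derivation k A A),
        (∀ i, ξ i ∈ v) →
        ∀ hmem : ∑ i, f i • ξ i ∈ Submodule.span A ((v : Set (Derivation k A A))),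
          D ⟨∑ i, f i • ξ i, hmem⟩ = ∑ i, (ξ i) (f i)) ∧
      (∀ (g : A) (θ : (Submodule.span A ((v : Set (Derivation k A A))))),
        D (g • θ) = g * D θ + (θ : Derivation k A A) g) := by
  classical
  have hrep : ∀ θ : Submodule.span A ((v : Set (Derivation k A A))),
      ∃ p : Σ n : ℕ, (Fin n → A) × (Fin n → Derivation k A A),
        (∀ i, p.2.2 i ∈ v) ∧ ∑ i, p.2.1 i • p.2.2 i = (θ : Derivation k A A) := by
    intro θ
    obtain ⟨n, f, g, hg⟩ := Submodule.mem_span_set'.mp θ.2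
    exact ⟨⟨n, f, fun i => (g i : Derivation k A A)⟩, fun i => (g i).2, hg⟩
  choose p hp1 hp2 using hrep
  set d : Submodule.span A ((v : Set (Derivation k A A))) → A :=
    fun θ => ∑ i, ((p θ).2.2 i) ((p θ).2.1 i) with hd
  have hdkey : ∀ (θ : Submodule.span A ((v : Set (Derivation k A A))))
      (m : ℕ) (f : Fin m → A) (ξ : Fin m → Derivation k A A),
      (∀ i, ξ i ∈ v) → ∑ i, f i • ξ i = (θ : Derivation k A A) →
      d θ = ∑ i, (ξ i) (f i) := by
    intro θ m f ξ hξ hsum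
    exact stmt5_key v hinc _ _ f ξ (hp1 θ) hξ (by rw [hp2 θ, ← hsum])
  refine ⟨{ toFun := d, map_add' := ?_, map_smul' := ?_ }, ?_, ?_⟩
  · intro θ θ'
    have := hdkey (θ + θ') ((p θ).1 + (p θ').1)
      (Fin.append (p θ).2.1 (p θ').2.1) (Fin.append (p θ).2.2 (p θ').2.2)
      (by
        intro i
        refine Fin.addCases (fun i => ?_) (fun i => ?_) i
        · simpa using hp1 θ i
        · simpa using hp1 θ' i)
      (by
        rw [Fin.sum_univ_add]
        simp only [Fin.append_left, Fin.append_right, hp2]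
        rfl)
    rw [this, Fin.sum_univ_add]
    simp only [Fin.append_left, Fin.append_right]
    rfl
  · intro c θ
    show d (c • θ) = (RingHom.id k) c • d θ
    have := hdkey (c • θ) (p θ).1 (fun i => c • (p θ).2.1 i) (p θ).2.2 (hp1 θ)
      (by
        rw [show ((c • θ : Submodule.span A ((v : Set (Derivation k A A)))) : Derivation k A A)
          = c • (θ : Derivation k A A) from rfl, ← hp2 θ, Finset.smul_sum]
        exact Finset.sum_congr rfl fun i _ => smul_assoc c _ _)
    rw [this]
    have h3 : ∀ x, ((p θ).2.2 x) (c • (p θ).2.1 x) = c • ((p θ).2.2 x) ((p θ).2.1 x) :=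
      fun x => ((p θ).2.2 x).map_smul c ((p θ).2.1 x)
    rw [Finset.sum_congr rfl fun i _ => h3 i, ← Finset.smul_sum]
    rfl
  · intro m f ξ hξ hmem
    exact hdkey ⟨∑ i, f i • ξ i, hmem⟩ m f ξ hξ rfl
  · intro g θ
    have h1 := hdkey (g • θ) (p θ).1 (fun i => g * (p θ).2.1 i) (p θ).2.2 (hp1 θ)
      (by
        rw [show ((g • θ : Submodule.span A ((v : Set (Derivation k A A)))) : Derivation k A A)
          = g • (θ : Derivation k A A) from rfl, ← hp2 θ, Finset.smul_sum]
        exact Finset.sum_congr rfl fun i _ => (smul_smul g _ _).symm)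
    show d (g • θ) = g * d θ + _
    rw [h1]
    have h2 : ∀ i, ((p θ).2.2 i) (g * (p θ).2.1 i)
        = g * ((p θ).2.2 i) ((p θ).2.1 i) + (p θ).2.1 i * ((p θ).2.2 i) g := by
      intro i
      rw [Derivation.leibniz]
      simp [smul_eq_mul]
    rw [Finset.sum_congr rfl fun i _ => h2 i, Finset.sum_add_distrib, ← Finset.mul_sum]
    congr 1
    rw [← stmt5_eval_sum (p θ).2.1 (p θ).2.2 g, hp2 θ]
end

section
/- Let k be a field of characteristic zero and A = k[x, y, z, z^{−1}]. Let V ⊆ A be the k-linear span of all elements of the forms y²·a, (y∂_y + z∂_z)(a), and ∂_z(a) for a ∈ A. Then the quotient vector space A/V is infinite-dimensional; more precisely, A decomposes as A = V ⊕ W where W is the k-span of the monomials x^i y z^{−1} for i ≥ 0. -/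
/-- The ring `A = k[x, y, z, z⁻¹]`, modeled as the monoid algebra of `ℕ × ℕ × ℤ`,
with monomial `x^i y^j z^l` corresponding to `(i, j, l)`. -/
noncomputable abbrev LRing (k : Type*) [Field k] := AddMonoidAlgebra k (ℕ × ℕ × ℤ)

/-- The derivation `y∂_y + z∂_z` : on monomials, `x^i y^j z^l ↦ (j + l)·x^i y^j z^l`. -/
noncomputable def Dyz (k : Type*) [Field k] : LRing k →ₗ[k] LRing k :=
  (Finsupp.lsum k fun m => LinearMap.toSpanSingleton k (LRing k)
    (AddMonoidAlgebra.single m ((((m.2.1 : ℤ) + m.2.2 : ℤ) : k))))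
    ∘ₗ (AddMonoidAlgebra.coeffLinearEquiv k).toLinearMap

/-- The derivation `∂_z` : on monomials, `x^i y^j z^l ↦ l·x^i y^j z^(l−1)`. -/
noncomputable def Dz (k : Type*) [Field k] : LRing k →ₗ[k] LRing k :=
  (Finsupp.lsum k fun m => LinearMap.toSpanSingleton k (LRing k)
    (AddMonoidAlgebra.single (m.1, m.2.1, m.2.2 - 1) ((m.2.2 : ℤ) : k)))
    ∘ₗ (AddMonoidAlgebra.coeffLinearEquiv k).toLinearMap

/-- The subspace `V = y²·A + (y∂_y + z∂_z)(A) + ∂_z(A)`. -/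
noncomputable def Vsub (k : Type*) [Field k] : Submodule k (LRing k) :=
  Submodule.span k
    (Set.range (fun a : LRing k =>
        AddMonoidAlgebra.single ((0 : ℕ), (2 : ℕ), (0 : ℤ)) (1 : k) * a) ∪
      Set.range (Dyz k) ∪ Set.range (Dz k))

/-- The subspace `W` spanned by the monomials `x^i y z⁻¹`, `i ≥ 0`. -/
noncomputable def Wsub (k : Type*) [Field k] : Submodule k (LRing k) :=
  Submodule.span k
    (Set.range fun i : ℕ =>
      (AddMonoidAlgebra.single (i, (1 : ℕ), (-1 : ℤ)) (1 : k) : LRing k))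

lemma sms (k : Type*) [Field k] (a b : ℕ × ℕ × ℤ) (c d : k) :
    (AddMonoidAlgebra.single a c : LRing k) * AddMonoidAlgebra.single b d
      = AddMonoidAlgebra.single (a + b) (c * d) :=
  AddMonoidAlgebra.single_mul_single _ _ _ _

lemma dyz_single (k : Type*) [Field k] (m : ℕ × ℕ × ℤ) (c : k) :
    Dyz k (AddMonoidAlgebra.single m c : LRing k)
      = c • AddMonoidAlgebra.single m ((((m.2.1 : ℤ) + m.2.2 : ℤ) : k)) := by
  have h1 : Dyz k (AddMonoidAlgebra.single m c : LRing k)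
      = (Finsupp.single m c).sum (fun b d =>
          d • AddMonoidAlgebra.single b ((((b.2.1 : ℤ) + b.2.2 : ℤ) : k))) := rfl
  rw [h1, Finsupp.sum_single_index (by rw [zero_smul])]

lemma dz_single (k : Type*) [Field k] (m : ℕ × ℕ × ℤ) (c : k) :
    Dz k (AddMonoidAlgebra.single m c : LRing k)
      = c • AddMonoidAlgebra.single ((m.1, m.2.1, m.2.2 - 1) : ℕ × ℕ × ℤ) ((m.2.2 : ℤ) : k) := by
  have h1 : Dz k (AddMonoidAlgebra.single m c : LRing k)
      = (Finsupp.single m c).sum (fun b d =>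
          d • AddMonoidAlgebra.single ((b.1, b.2.1, b.2.2 - 1) : ℕ × ℕ × ℤ) ((b.2.2 : ℤ) : k)) := rfl
  rw [h1, Finsupp.sum_single_index (by rw [zero_smul])]

lemma single_mem_V (k : Type*) [Field k] [CharZero k] (m : ℕ × ℕ × ℤ)
    (h : ¬ (m.2.1 = 1 ∧ m.2.2 = -1)) :
    (AddMonoidAlgebra.single m (1 : k) : LRing k) ∈ Vsub k := by
  obtain ⟨i, j, l⟩ := m
  simp only [Prod.snd] at h
  by_cases hjl : (j : ℤ) + l = 0
  · rcases Nat.lt_or_ge j 2 with hj | hj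
    · interval_cases j
      · -- j = 0, l = 0
        have hl : l = 0 := by
          have : ((0 : ℕ) : ℤ) + l = 0 := hjl
          omega
        subst hl
        have heq : Dz k (AddMonoidAlgebra.single ((i, 0, 1) : ℕ × ℕ × ℤ) (1 : k) : LRing k)
            = AddMonoidAlgebra.single ((i, 0, 0) : ℕ × ℕ × ℤ) (1 : k) := by
          rw [dz_single]; norm_num
        rw [← heq]
        exact Submodule.subset_span (Or.inr ⟨_, rfl⟩)
      · -- j = 1, l = -1 excluded
        have hl : l = -1 := by
          have : ((1 : ℕ) : ℤ) + l = 0 := hjl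
          omega
        exact absurd ⟨rfl, hl⟩ h
    · -- j ≥ 2
      have hidx : ((0, 2, 0) : ℕ × ℕ × ℤ) + (i, j - 2, l) = (i, j, l) := by
        refine Prod.ext (by simp) (Prod.ext ?_ (by simp))
        show 2 + (j - 2) = j
        omega
      refine Submodule.subset_span (Or.inl (Or.inl
        ⟨AddMonoidAlgebra.single ((i, j - 2, l) : ℕ × ℕ × ℤ) (1 : k), ?_⟩))
      show (AddMonoidAlgebra.single ((0 : ℕ), (2 : ℕ), (0 : ℤ)) (1 : k) : LRing k)
          * AddMonoidAlgebra.single ((i, j - 2, l) : ℕ × ℕ × ℤ) (1 : k)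
        = AddMonoidAlgebra.single ((i, j, l) : ℕ × ℕ × ℤ) (1 : k)
      rw [sms, hidx, mul_one]
  · -- j + l ≠ 0
    set t : k := (((j : ℤ) + l : ℤ) : k) with ht
    have ht0 : t ≠ 0 := by
      rw [ht]; exact_mod_cast hjl
    have hD : Dyz k (AddMonoidAlgebra.single ((i, j, l) : ℕ × ℕ × ℤ) (1 : k) : LRing k)
        = AddMonoidAlgebra.single ((i, j, l) : ℕ × ℕ × ℤ) t := by
      rw [dyz_single, one_smul]
    have h2 : (AddMonoidAlgebra.single ((i, j, l) : ℕ × ℕ × ℤ) (1 : k) : LRing k)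
        = t⁻¹ • Dyz k (AddMonoidAlgebra.single ((i, j, l) : ℕ × ℕ × ℤ) (1 : k) : LRing k) := by
      rw [hD]
      rw [AddMonoidAlgebra.smul_single, smul_eq_mul, inv_mul_cancel₀ ht0]
    rw [h2]
    exact Submodule.smul_mem _ _
      (Submodule.subset_span (Or.inl (Or.inr ⟨_, rfl⟩)))

lemma memV_apply (k : Type*) [Field k] [CharZero k] {a : LRing k} (ha : a ∈ Vsub k)
    (i : ℕ) : a.coeff (i, 1, -1) = 0 := by
  induction ha using Submodule.span_induction with
  | mem x hx =>
    rcases hx with (⟨b, rfl⟩ | ⟨b, rfl⟩) | ⟨b, rfl⟩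
    · -- y² * b
      show (AddMonoidAlgebra.single ((0 : ℕ), (2 : ℕ), (0 : ℤ)) (1 : k) * b).coeff (i, 1, -1) = 0
      induction b using AddMonoidAlgebra.induction_linear with
      | zero => simp
      | add f g hf hg =>
        rw [mul_add, AddMonoidAlgebra.coeff_add, Finsupp.add_apply, hf, hg, add_zero]
      | single n c =>
        show ((AddMonoidAlgebra.single ((0 : ℕ), (2 : ℕ), (0 : ℤ)) (1 : k) : LRing k)
            * AddMonoidAlgebra.single n c).coeff (i, 1, -1) = 0
        rw [sms, AddMonoidAlgebra.coeff_single]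
        refine Finsupp.single_eq_of_ne' ?_
        intro hcontra
        have := congrArg (fun p : ℕ × ℕ × ℤ => p.2.1) hcontra
        simp at this
        omega
    · -- Dyz b
      induction b using AddMonoidAlgebra.induction_linear with
      | zero => simp
      | add f g hf hg => rw [map_add, AddMonoidAlgebra.coeff_add, Finsupp.add_apply, hf, hg, add_zero]
      | single n c =>
        show (Dyz k (AddMonoidAlgebra.single n c : LRing k)).coeff (i, 1, -1) = 0
        rw [dyz_single, AddMonoidAlgebra.coeff_smul, Finsupp.smul_apply]
        by_cases hn : n = ((i, 1, -1) : ℕ × ℕ × ℤ)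
        · subst hn
          norm_num
        · rw [AddMonoidAlgebra.coeff_single,
            Finsupp.single_eq_of_ne' hn, smul_zero]
    · -- Dz b
      induction b using AddMonoidAlgebra.induction_linear with
      | zero => simp
      | add f g hf hg => rw [map_add, AddMonoidAlgebra.coeff_add, Finsupp.add_apply, hf, hg, add_zero]
      | single n c =>
        show (Dz k (AddMonoidAlgebra.single n c : LRing k)).coeff (i, 1, -1) = 0
        rw [dz_single, AddMonoidAlgebra.coeff_smul, Finsupp.smul_apply]
        by_cases hn : ((n.1, n.2.1, n.2.2 - 1) : ℕ × ℕ × ℤ) = ((i, 1, -1) : ℕ × ℕ × ℤ)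
        · have h22 : n.2.2 = 0 := by
            have := congrArg (fun p : ℕ × ℕ × ℤ => p.2.2) hn
            simp at this
            omega
          rw [hn, h22]
          norm_num
        · rw [AddMonoidAlgebra.coeff_single,
            Finsupp.single_eq_of_ne' hn, smul_zero]
  | zero => simp
  | add x y _ _ hx hy => rw [AddMonoidAlgebra.coeff_add, Finsupp.add_apply, hx, hy, add_zero]
  | smul c x _ hx => rw [AddMonoidAlgebra.coeff_smul, Finsupp.smul_apply, hx, smul_zero]

lemma memW_apply (k : Type*) [Field k] {a : LRing k} (ha : a ∈ Wsub k)
    (m : ℕ × ℕ × ℤ) (h : ¬ (m.2.1 = 1 ∧ m.2.2 = -1)) : a.coeff m = 0 := by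
  induction ha using Submodule.span_induction with
  | mem x hx =>
    obtain ⟨i, rfl⟩ := hx
    rw [AddMonoidAlgebra.coeff_single]
    refine Finsupp.single_eq_of_ne' ?_
    intro hcontra
    exact h ⟨(congrArg (fun p : ℕ × ℕ × ℤ => p.2.1) hcontra).symm,
      (congrArg (fun p : ℕ × ℕ × ℤ => p.2.2) hcontra).symm⟩
  | zero => simp
  | add x y _ _ hx hy => rw [AddMonoidAlgebra.coeff_add, Finsupp.add_apply, hx, hy, add_zero]
  | smul c x _ hx => rw [AddMonoidAlgebra.coeff_smul, Finsupp.smul_apply, hx, smul_zero]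

lemma top_le_sup (k : Type*) [Field k] [CharZero k] (a : LRing k) :
    a ∈ Vsub k ⊔ Wsub k := by
  induction a using AddMonoidAlgebra.induction_linear with
  | zero => exact Submodule.zero_mem _
  | add f g hf hg => exact Submodule.add_mem _ hf hg
  | single n c =>
    have hc : (AddMonoidAlgebra.single n c : LRing k)
        = c • (AddMonoidAlgebra.single n (1 : k) : LRing k) := by
      rw [AddMonoidAlgebra.smul_single, smul_eq_mul, mul_one]
    rw [hc]
    refine Submodule.smul_mem _ _ ?_
    by_cases hn : n.2.1 = 1 ∧ n.2.2 = -1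
    · have hne : n = (n.1, 1, -1) := Prod.ext rfl (Prod.ext hn.1 hn.2)
      rw [hne]
      exact Submodule.mem_sup_right (Submodule.subset_span ⟨n.1, rfl⟩)
    · exact Submodule.mem_sup_left (single_mem_V k n hn)

/-- For `A = k[x,y,z,z⁻¹]` and `V` the span of all `y²·a`, `(y∂_y + z∂_z)(a)`, `∂_z(a)`:
`A = V ⊕ W` where `W` is spanned by the monomials `x^i y z⁻¹`, and `A/V` is
infinite-dimensional over `k`. -/
theorem stmt12 (k : Type*) [Field k] [CharZero k] :
    IsCompl (Vsub k) (Wsub k) ∧ ¬ Module.Finite k (LRing k ⧸ Vsub k) := by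
  have hcompl : IsCompl (Vsub k) (Wsub k) := by
    constructor
    · rw [disjoint_iff_inf_le]
      rintro a ⟨haV, haW⟩
      ext m
      by_cases hm : m.2.1 = 1 ∧ m.2.2 = -1
      · have hme : m = (m.1, 1, -1) := Prod.ext rfl (Prod.ext hm.1 hm.2)
        rw [hme]
        exact memV_apply k haV m.1
      · exact memW_apply k haW m hm
    · rw [codisjoint_iff, eq_top_iff]
      intro a _
      exact top_le_sup k a
  refine ⟨hcompl, fun hfin => ?_⟩
  haveI := hfin
  have li0 : LinearIndependent k
      (fun i : ℕ => (AddMonoidAlgebra.single ((i, 1, -1) : ℕ × ℕ × ℤ) (1 : k) : LRing k)) := by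
    have hb := (Finsupp.basisSingleOne (R := k) (ι := ℕ × ℕ × ℤ)).linearIndependent
    have hinj : Function.Injective (fun i : ℕ => ((i, 1, -1) : ℕ × ℕ × ℤ)) := by
      intro a b hab
      simpa using congrArg (fun p : ℕ × ℕ × ℤ => p.1) hab
    have := hb.comp _ hinj
    exact this.map' (AddMonoidAlgebra.coeffLinearEquiv k).symm.toLinearMap (LinearEquiv.ker _)
  have hdisj : Disjoint
      (Submodule.span k (Set.range
        (fun i : ℕ => (AddMonoidAlgebra.single ((i, 1, -1) : ℕ × ℕ × ℤ) (1 : k) : LRing k))))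
      (LinearMap.ker (Vsub k).mkQ) := by
    rw [Submodule.ker_mkQ]
    exact hcompl.disjoint.symm
  have li := li0.map hdisj
  haveI : Finite ℕ := LinearIndependent.finite li
  exact not_finite ℕ
end

section
/- Let k be a field of characteristic zero and B = k[x,y,z]/(x³ + y³ + z³), equipped with the Poisson bracket determined by {x,y} = 3z², {y,z} = 3x², {z,x} = 3y² (the Jacobian Poisson structure). Then: (a) the Euler derivation E = x∂_x + y∂_y + z∂_z of B is a Poisson derivation, i.e., E({f,g}) = {E(f), g} + {f, E(g)} for all f, g ∈ B; (b) E is not Hamiltonian: there is no h ∈ B with {h, f} = E(f) for all f ∈ B. For (b) it suffices that {h, x} lies in the square m² of the maximal ideal m = (x,y,z) for every h, while E(x) = x ∉ m². -/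
set_option synthInstance.maxHeartbeats 1000000
open MvPolynomial
set_option maxHeartbeats 4000000

/-- The coordinate ring `B = k[x,y,z]/(x³ + y³ + z³)` of the cone over the Fermat cubic. -/
noncomputable abbrev FermatCone (k : Type*) [Field k] :=
  MvPolynomial (Fin 3) k ⧸
    (Ideal.span {((X 0 : MvPolynomial (Fin 3) k) ^ 3 + (X 1) ^ 3 + (X 2) ^ 3)})

/-- On `B = k[x,y,z]/(x³+y³+z³)` with the Jacobian Poisson bracket determined by
`{x,y} = 3z²`, `{y,z} = 3x²`, `{z,x} = 3y²`: (a) the Euler derivation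
`E = x∂_x + y∂_y + z∂_z` is Poisson, and (b) `E` is not Hamiltonian. -/
theorem stmt13 (k : Type*) [Field k] [CharZero k]
    (ξ : FermatCone k → Derivation k (FermatCone k) (FermatCone k))
    (skew : ∀ f g, ξ f g = - ξ g f)
    (jacobi : ∀ f g h, ξ f (ξ g h) = ξ (ξ f g) h + ξ g (ξ f h))
    (hxy : ξ (Ideal.Quotient.mk _ (X 0)) (Ideal.Quotient.mk _ (X 1)) =
      Ideal.Quotient.mk _ (3 * (X 2 : MvPolynomial (Fin 3) k) ^ 2))
    (hyz : ξ (Ideal.Quotient.mk _ (X 1)) (Ideal.Quotient.mk _ (X 2)) =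
      Ideal.Quotient.mk _ (3 * (X 0 : MvPolynomial (Fin 3) k) ^ 2))
    (hzx : ξ (Ideal.Quotient.mk _ (X 2)) (Ideal.Quotient.mk _ (X 0)) =
      Ideal.Quotient.mk _ (3 * (X 1 : MvPolynomial (Fin 3) k) ^ 2))
    (E : Derivation k (FermatCone k) (FermatCone k))
    (hE : ∀ i : Fin 3, E (Ideal.Quotient.mk _ (X i)) = Ideal.Quotient.mk _ (X i)) :
    (∀ f g, E (ξ f g) = ξ (E f) g + ξ f (E g)) ∧
    ¬ ∃ h : FermatCone k, ∀ f, ξ h f = E f := by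
  classical
  set I : Ideal (MvPolynomial (Fin 3) k) :=
    Ideal.span {((X 0 : MvPolynomial (Fin 3) k) ^ 3 + (X 1) ^ 3 + (X 2) ^ 3)} with hI
  set π : MvPolynomial (Fin 3) k →+* FermatCone k := Ideal.Quotient.mk I with hπ
  -- halving
  have half : ∀ a : FermatCone k, a = -a → a = 0 := by
    intro a h
    have h2 : (2 : k) • a = 0 := by
      rw [two_smul]
      nth_rewrite 1 [h]
      exact neg_add_cancel a
    have := congrArg (fun b => (2 : k)⁻¹ • b) h2
    simpa [smul_smul, inv_mul_cancel₀ (two_ne_zero (α := k))] using this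
  have diag : ∀ f : FermatCone k, ξ f f = 0 := fun f => half _ (skew f f)
  -- generation
  have htop : Algebra.adjoin k (Set.range fun i : Fin 3 => π (X i)) = ⊤ := by
    have h1 : (Set.range fun i : Fin 3 => π (X i))
        = (Ideal.Quotient.mkₐ k I) '' Set.range X := by
      rw [← Set.range_comp]; rfl
    rw [h1, ← AlgHom.map_adjoin, MvPolynomial.adjoin_range_X, Algebra.map_top]
    exact (AlgHom.range_eq_top _).2 (Ideal.Quotient.mkₐ_surjective k I)
  have Dext : ∀ D1 D2 : Derivation k (FermatCone k) (FermatCone k),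
      (∀ i : Fin 3, D1 (π (X i)) = D2 (π (X i))) → D1 = D2 := by
    intro D1 D2 h
    refine Derivation.ext_of_adjoin_eq_top _ htop ?_
    rintro a ⟨i, rfl⟩
    exact h i
  -- quadratic elements
  set q : Fin 3 → FermatCone k := fun i => π (3 * (X i) ^ 2) with hq
  have hq' : ∀ i, q i = (3 : FermatCone k) * (π (X i) * π (X i)) := by
    intro i
    simp [hq, map_mul, map_pow, sq, map_ofNat]
  have hE3 : E (3 : FermatCone k) = 0 := by
    rw [show ((3 : FermatCone k)) = algebraMap k (FermatCone k) 3 by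
      rw [map_ofNat]]
    exact Derivation.map_algebraMap E 3
  have hEq : ∀ i, E (q i) = q i + q i := by
    intro i
    rw [hq' i, Derivation.leibniz, Derivation.leibniz, hE3, hE i]
    simp only [smul_eq_mul]
    ring
  -- step1
  have step1 : ∀ i : Fin 3, (⁅E, ξ (π (X i))⁆ : Derivation k (FermatCone k) (FermatCone k))
      = ξ (π (X i)) := by
    intro i
    apply Dext
    intro j
    rw [Derivation.commutator_apply, hE j]
    have cases3 : ∀ m : Fin 3, m = 0 ∨ m = 1 ∨ m = 2 := by decide
    rcases cases3 i with rfl | rfl | rfl <;> rcases cases3 j with rfl | rfl | rfl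
    · simp [diag]
    · rw [show ξ (π (X 0)) (π (X 1)) = q 2 from hxy, hEq 2]; ring
    · have h : ξ (π (X 0)) (π (X 2)) = -(q 1) := by rw [skew]; rw [show ξ (π (X 2)) (π (X 0)) = q 1 from hzx]
      rw [h, map_neg, hEq 1]; ring
    · have h : ξ (π (X 1)) (π (X 0)) = -(q 2) := by rw [skew]; rw [show ξ (π (X 0)) (π (X 1)) = q 2 from hxy]
      rw [h, map_neg, hEq 2]; ring
    · simp [diag]
    · rw [show ξ (π (X 1)) (π (X 2)) = q 0 from hyz, hEq 0]; ring
    · rw [show ξ (π (X 2)) (π (X 0)) = q 1 from hzx, hEq 1]; ring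
    · have h : ξ (π (X 2)) (π (X 1)) = -(q 0) := by rw [skew]; rw [show ξ (π (X 1)) (π (X 2)) = q 0 from hyz]
      rw [h, map_neg, hEq 0]; ring
    · simp [diag]
  -- step2
  have step2 : ∀ g, (⁅E, ξ g⁆ : Derivation k (FermatCone k) (FermatCone k)) = ξ (E g) := by
    intro g
    apply Dext
    intro i
    rw [Derivation.commutator_apply, hE i]
    have h1 : ξ g (π (X i)) = -(ξ (π (X i)) g) := skew _ _
    have h2 : ξ (E g) (π (X i)) = -(ξ (π (X i)) (E g)) := skew _ _
    have h3 := congrArg (fun D : Derivation k (FermatCone k) (FermatCone k) => D g) (step1 i)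
    simp only [Derivation.commutator_apply] at h3
    rw [h1, h2, map_neg]
    linear_combination -h3
  constructor
  · intro f g
    have := congrArg (fun D : Derivation k (FermatCone k) (FermatCone k) => D g) (step2 f)
    simp only [Derivation.commutator_apply] at this
    linear_combination this
  · rintro ⟨h, hh⟩
    set N : Ideal (MvPolynomial (Fin 3) k) := Ideal.span {X 0, X 1, X 2} with hN
    have hXN : ∀ i : Fin 3, (X i : MvPolynomial (Fin 3) k) ∈ N := by
      intro i
      have cases3 : ∀ m : Fin 3, m = 0 ∨ m = 1 ∨ m = 2 := by decide
      rcases cases3 i with rfl | rfl | rfl <;> exact Ideal.subset_span (by simp)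
    set M : Ideal (FermatCone k) := Ideal.map π N with hM
    have hπXM : ∀ i : Fin 3, π (X i) ∈ M := fun i => Ideal.mem_map_of_mem π (hXN i)
    have hqM2 : ∀ i, q i ∈ M * M := by
      intro i
      rw [hq' i]
      exact Ideal.mul_mem_left _ _ (Ideal.mul_mem_mul (hπXM i) (hπXM i))
    -- every ξ x b lands in M²
    have hD : ∀ b : FermatCone k, ξ (π (X 0)) b ∈ M * M := by
      intro b
      have hb : b ∈ Algebra.adjoin k (Set.range fun i : Fin 3 => π (X i)) := by
        rw [htop]; trivial
      induction hb using Algebra.adjoin_induction with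
      | mem a ha =>
        obtain ⟨i, rfl⟩ := ha
        have cases3 : ∀ m : Fin 3, m = 0 ∨ m = 1 ∨ m = 2 := by decide
        rcases cases3 i with rfl | rfl | rfl
        · rw [diag]; exact zero_mem _
        · rw [show ξ (π (X 0)) (π (X 1)) = q 2 from hxy]; exact hqM2 2
        · have : ξ (π (X 0)) (π (X 2)) = -(q 1) := by
            rw [skew]; rw [show ξ (π (X 2)) (π (X 0)) = q 1 from hzx]
          rw [this]; exact neg_mem (hqM2 1)
      | algebraMap r => rw [Derivation.map_algebraMap]; exact zero_mem _
      | add a b _ _ ha hb => rw [map_add]; exact add_mem ha hb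
      | mul a b _ _ ha hb =>
        rw [Derivation.leibniz, smul_eq_mul, smul_eq_mul]
        exact add_mem (Ideal.mul_mem_left _ _ hb) (Ideal.mul_mem_left _ _ ha)
    have hxM2 : π (X 0) ∈ M * M := by
      have h1 : ξ h (π (X 0)) = π (X 0) := by rw [hh, hE]
      have h2 : ξ h (π (X 0)) = -(ξ (π (X 0)) h) := skew _ _
      rw [← h1, h2]
      exact neg_mem (hD h)
    -- pull back to the polynomial ring
    have hmap : M * M = Ideal.map π (N * N) := (Ideal.map_mul π N N).symm
    rw [hmap, Ideal.mem_map_iff_of_surjective π Ideal.Quotient.mk_surjective] at hxM2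
    obtain ⟨p, hp, hpx⟩ := hxM2
    have hsub : p - X 0 ∈ I := by
      rw [← Ideal.Quotient.eq]
      exact hpx
    have hIN2 : I ≤ N * N := by
      rw [hI, Ideal.span_le, Set.singleton_subset_iff]
      have hsq : ∀ i : Fin 3, (X i : MvPolynomial (Fin 3) k) ^ 2 ∈ N := by
        intro i
        rw [sq]
        exact Ideal.mul_mem_left _ _ (hXN i)
      have hcube : ∀ i : Fin 3, (X i : MvPolynomial (Fin 3) k) ^ 3 ∈ N * N := by
        intro i
        rw [pow_succ]
        exact Ideal.mul_mem_mul (hsq i) (hXN i)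
      exact add_mem (add_mem (hcube 0) (hcube 1)) (hcube 2)
    have hX0 : (X 0 : MvPolynomial (Fin 3) k) ∈ N * N := by
      have := sub_mem hp (hIN2 hsub)
      simpa using this
    -- linear functional kills N*N but not X 0
    have key0 : ∀ r ∈ N * N, eval (0 : Fin 3 → k) (pderiv 0 r) = 0 := by
      intro r hr
      have hev : ∀ m ∈ N, eval (0 : Fin 3 → k) m = 0 := by
        intro m hm
        have hle : N ≤ RingHom.ker (eval (0 : Fin 3 → k)) := by
          rw [hN, Ideal.span_le]
          rintro s hs
          simp only [Set.mem_insert_iff, Set.mem_singleton_iff] at hs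
          rcases hs with rfl | rfl | rfl <;> simp [RingHom.mem_ker]
        exact hle hm
      refine Submodule.mul_induction_on hr ?_ ?_
      · intro m hm n hn
        rw [pderiv_mul, map_add, map_mul, map_mul, hev m hm, hev n hn]
        ring
      · intro a b ha hb
        rw [map_add, map_add, ha, hb, add_zero]
    have := key0 _ hX0
    rw [pderiv_X_self, map_one] at this
    exact one_ne_zero this
end
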